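/- Let G be a finite simple graph and let x be a half-integral optimal solution to LPVC(G). Then LP(G[V^x_{1/2}]) = LP(G) − |V^x_1|, where G[V^x_{1/2}] is the induced subgraph of G on V^x_{1/2}. -/

import Mathlib

open scoped Classical

/-- A fractional vertex cover of `G`. -/
def IsFVC {V : Type} (G : SimpleGraph V) (x : V → ℝ) : Prop :=
  (∀ v, 0 ≤ x v ∧ x v ≤ 1) ∧ ∀ ⦃u v⦄, G.Adj u v → 1 ≤ x u + x v

/-- The weight of a fractional vertex cover. -/
noncomputable def fvcWeight {V : Type} [Fintype V] (x : V → ℝ) : ℝ := ∑ v, x v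

/-- `LP(G)`: the minimum weight of a fractional vertex cover of `G`. -/
noncomputable def LPopt {V : Type} [Fintype V] (G : SimpleGraph V) : ℝ :=
  sInf {w : ℝ | ∃ x : V → ℝ, IsFVC G x ∧ w = fvcWeight x}

/-- A matching of `G`: a set of pairwise vertex-disjoint edges of `G`. -/
def IsMatchingSet {V : Type} (G : SimpleGraph V) (M : Finset (Sym2 V)) : Prop :=
  (∀ e ∈ M, e ∈ G.edgeSet) ∧ ∀ e ∈ M, ∀ f ∈ M, e ≠ f → ∀ v : V, v ∈ e → v ∉ f

/-- `MM(G)`: the maximum size of a matching of `G`. -/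
noncomputable def MMnum {V : Type} (G : SimpleGraph V) : ℕ :=
  sSup {n : ℕ | ∃ M : Finset (Sym2 V), IsMatchingSet G M ∧ M.card = n}

/-- `OPT(G)`: the minimum size of a vertex cover of `G`. -/
noncomputable def VCnum {V : Type} (G : SimpleGraph V) : ℕ :=
  sInf {n : ℕ | ∃ S : Finset V, (∀ ⦃u v⦄, G.Adj u v → u ∈ S ∨ v ∈ S) ∧ S.card = n}

/-- `N(X)`: the set of vertices outside `X` having a neighbour in `X`. -/
def nbhd {V : Type} (G : SimpleGraph V) (X : Set V) : Set V :=
  {v | v ∉ X ∧ ∃ u ∈ X, G.Adj u v}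

/-- `X` is an independent set in `G`. -/
def IndepSet {V : Type} (G : SimpleGraph V) (X : Set V) : Prop :=
  ∀ u ∈ X, ∀ v ∈ X, ¬ G.Adj u v

/-- `surplus(G) ≥ s`: every nonempty independent set `X` satisfies `|N(X)| ≥ |X| + s`. -/
def SurplusGE {V : Type} (G : SimpleGraph V) (s : ℕ) : Prop :=
  ∀ X : Set V, X.Nonempty → IndepSet G X → X.ncard + s ≤ (nbhd G X).ncard

/-- The matching `M` saturates the vertex `v`. -/
def Saturates {V : Type} (M : Finset (Sym2 V)) (v : V) : Prop := ∃ e ∈ M, v ∈ e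

/-- `O(G)`: vertices left unsaturated by some maximum matching of `G`. -/
def OSet {V : Type} (G : SimpleGraph V) : Set V :=
  {v | ∃ M : Finset (Sym2 V), IsMatchingSet G M ∧ M.card = MMnum G ∧ ¬ Saturates M v}

/-- `I(G)`: vertices outside `O(G)` having a neighbour in `O(G)`. -/
def ISet {V : Type} (G : SimpleGraph V) : Set V := nbhd G (OSet G)

/-- `P(G)`: the remaining vertices. -/
def GEPSet {V : Type} (G : SimpleGraph V) : Set V := (OSet G ∪ ISet G)ᶜ


lemma lp_set_nonempty {V : Type} [Fintype V] (G : SimpleGraph V) :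
    {w : ℝ | ∃ x : V → ℝ, IsFVC G x ∧ w = fvcWeight x}.Nonempty :=
  ⟨fvcWeight (fun _ => (1:ℝ)), fun _ => (1:ℝ),
    ⟨fun _ => by norm_num, fun u v _ => by norm_num⟩, rfl⟩

lemma lp_set_bdd {V : Type} [Fintype V] (G : SimpleGraph V) :
    BddBelow {w : ℝ | ∃ x : V → ℝ, IsFVC G x ∧ w = fvcWeight x} := by
  refine ⟨0, ?_⟩
  rintro w ⟨y, hy, rfl⟩
  exact Finset.sum_nonneg fun v _ => (hy.1 v).1

lemma LPopt_le {V : Type} [Fintype V] (G : SimpleGraph V) {y : V → ℝ} (hy : IsFVC G y) :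
    LPopt G ≤ fvcWeight y :=
  csInf_le (lp_set_bdd G) ⟨y, hy, rfl⟩

lemma le_LPopt {V : Type} [Fintype V] (G : SimpleGraph V) {c : ℝ}
    (h : ∀ y : V → ℝ, IsFVC G y → c ≤ fvcWeight y) : c ≤ LPopt G :=
  le_csInf (lp_set_nonempty G) (by rintro w ⟨y, hy, rfl⟩; exact h y hy)

/-- For a half-integral optimal LP solution `x`,
`LP(G[V^x_{1/2}]) = LP(G) − |V^x_1|`. -/
theorem lp_half_eq_lp_sub_ones {V : Type} [Fintype V] (G : SimpleGraph V)
    (x : V → ℝ) (hx : IsFVC G x)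
    (hhalf : ∀ v, x v = 0 ∨ x v = 1 / 2 ∨ x v = 1)
    (hopt : fvcWeight x = LPopt G) :
    LPopt (G.induce {v | x v = 1 / 2}) =
      LPopt G - (({v | x v = 1} : Set V).ncard : ℝ) := by
  classical
  set A : Set V := {v | x v = 1 / 2} with hA
  set B : Set V := {v | x v = 1} with hB
  -- a vertex adjacent to a half vertex but not half itself has value 1
  have hone : ∀ ⦃u v⦄, G.Adj u v → x u = 1/2 → x v ≠ 1/2 → x v = 1 := by
    intro u v huv hu hv
    have h1 := hx.2 huv
    rcases hhalf v with h | h | h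
    · rw [hu, h] at h1; norm_num at h1
    · exact absurd h hv
    · exact h
  have hcardA : (Finset.univ.filter (fun v => v ∈ A)).card = A.ncard := by
    rw [Set.ncard_eq_toFinset_card']
    congr 1
    ext v
    simp [A]
  have hcardB : (Finset.univ.filter (fun v => x v = 1)).card = B.ncard := by
    rw [Set.ncard_eq_toFinset_card']
    congr 1
    ext v
    simp [B]
  -- weight of x
  have hwx : fvcWeight x = (A.ncard : ℝ) / 2 + (B.ncard : ℝ) := by
    have hpt : ∀ v : V, x v =
        (if v ∈ A then (1/2 : ℝ) else 0) + (if x v = 1 then (1:ℝ) else 0) := by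
      intro v
      rcases hhalf v with h | h | h
      · have h2 : v ∉ A := by simp only [A, Set.mem_setOf_eq, h]; norm_num
        have h3 : x v ≠ 1 := by rw [h]; norm_num
        simp [h, h2, h3]
      · have h2 : v ∈ A := h
        have h3 : x v ≠ 1 := by rw [h]; norm_num
        simp [h, h2, h3]
      · have h2 : v ∉ A := by simp only [A, Set.mem_setOf_eq, h]; norm_num
        simp [h, h2]
    unfold fvcWeight
    rw [Finset.sum_congr rfl (fun v _ => hpt v), Finset.sum_add_distrib]
    rw [← Finset.sum_filter, ← Finset.sum_filter]
    rw [Finset.sum_const, Finset.sum_const, hcardA, hcardB]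
    push_cast
    ring
  have hwx' : LPopt G = (A.ncard : ℝ) / 2 + (B.ncard : ℝ) := by rw [← hopt, hwx]
  have hcardA' : (Fintype.card ↥A : ℝ) = (A.ncard : ℝ) := by
    rw [Set.ncard_eq_toFinset_card', Set.toFinset_card]
  apply le_antisymm
  · -- constant 1/2 is feasible on the induced graph
    have hfeas : IsFVC (G.induce A) (fun _ => (1/2 : ℝ)) :=
      ⟨fun _ => by norm_num, fun u v _ => by norm_num⟩
    have := LPopt_le (G.induce A) hfeas
    have hw : fvcWeight (fun _ : ↥A => (1/2 : ℝ)) = (A.ncard : ℝ) / 2 := by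
      unfold fvcWeight
      rw [Finset.sum_const, Finset.card_univ, nsmul_eq_mul, hcardA']
      ring
    rw [hw] at this
    rw [hwx']
    linarith
  · -- every feasible solution of the induced graph extends
    rw [hwx']
    apply le_LPopt
    intro y hy
    set z : V → ℝ := fun v => if h : v ∈ A then y ⟨v, h⟩ else x v with hz
    have hzfvc : IsFVC G z := by
      constructor
      · intro v
        by_cases h : v ∈ A
        · simp only [z, dif_pos h]; exact hy.1 ⟨v, h⟩
        · simp only [z, dif_neg h]; exact hx.1 v
      · intro u v huv
        by_cases hu : u ∈ A <;> by_cases hv : v ∈ A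
        · simp only [z, dif_pos hu, dif_pos hv]
          exact hy.2 (show (G.induce A).Adj ⟨u, hu⟩ ⟨v, hv⟩ from huv)
        · simp only [z, dif_pos hu, dif_neg hv]
          have h1 : x v = 1 := hone huv hu hv
          have h0 := (hy.1 ⟨u, hu⟩).1
          rw [h1]; linarith
        · simp only [z, dif_neg hu, dif_pos hv]
          have h1 : x u = 1 := hone huv.symm hv hu
          have h0 := (hy.1 ⟨v, hv⟩).1
          rw [h1]; linarith
        · simp only [z, dif_neg hu, dif_neg hv]
          exact hx.2 huv
    have hwz : fvcWeight z = fvcWeight y + (B.ncard : ℝ) := by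
      unfold fvcWeight
      rw [← Finset.sum_filter_add_sum_filter_not Finset.univ (fun v => v ∈ A) z]
      have h1 : ∑ v ∈ Finset.univ.filter (fun v => v ∈ A), z v = ∑ v : ↥A, y v := by
        rw [Finset.sum_subtype (p := fun v => v ∈ A)
          (Finset.univ.filter (fun v => v ∈ A)) (by intro v; simp) z]
        apply Finset.sum_congr rfl
        intro v _
        simp only [z, dif_pos v.2]
        rfl
      have h2 : ∑ v ∈ Finset.univ.filter (fun v => v ∉ A), z v = (B.ncard : ℝ) := by
        have hpt : ∀ v ∈ Finset.univ.filter (fun v => v ∉ A),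
            z v = (if x v = 1 then (1:ℝ) else 0) := by
          intro v hv
          simp only [Finset.mem_filter] at hv
          rcases hhalf v with h | h | h
          · have : x v ≠ 1 := by rw [h]; norm_num
            simp [z, dif_neg hv.2, h, this]
          · exact absurd h hv.2
          · simp [z, dif_neg hv.2, h]
        rw [Finset.sum_congr rfl hpt, ← Finset.sum_filter, Finset.filter_filter,
          Finset.sum_const]
        rw [← hcardB]
        have : Finset.univ.filter (fun v => v ∉ A ∧ x v = 1)
            = Finset.univ.filter (fun v => x v = 1) := by
          apply Finset.filter_congr
          intro v _
          constructor
          · rintro ⟨_, h⟩; exact h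
          · intro h
            refine ⟨?_, h⟩
            simp only [A, Set.mem_setOf_eq, h]
            norm_num
        rw [this]
        simp
      rw [h1, h2]
    have := LPopt_le G hzfvc
    rw [hwz, hwx'] at this
    linarith
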